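/- Let f : [a,b] → ℝ be Lipschitz continuous with constant L ≥ 0. Partition [a,b] into P equal subintervals and let f̂ be the piecewise linear interpolant of f at the partition points. Then ∫_a^b |f(x) − f̂(x)| dx ≤ L(b−a)²/(4P). -/

import Mathlib

open MeasureTheory Set

lemma integral_max_zero (T c : ℝ) (hT : 0 ≤ T) (hc : 0 < c) :
    ∫ t in Set.Ioi (0:ℝ), max 0 (T - c*t) = T^2/(2*c) := by
  have hTc : (0:ℝ) ≤ T/c := div_nonneg hT hc.le
  have hsplit : Set.Ioc (0:ℝ) (T/c) ∪ Set.Ioi (T/c) = Set.Ioi 0 := Set.Ioc_union_Ioi_eq_Ioi hTc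
  have hmeas1 : MeasurableSet (Set.Ioi (T/c)) := measurableSet_Ioi
  have hcont : Continuous fun t : ℝ => max 0 (T - c*t) :=
    continuous_const.max (continuous_const.sub (continuous_const.mul continuous_id))
  have hzero : ∀ x ∈ Set.Ioi (T/c), max 0 (T - c*x) = (0:ℝ) := by
    intro x hx
    have := (div_lt_iff₀ hc).mp (Set.mem_Ioi.mp hx)
    rw [max_eq_left]; nlinarith
  rw [← hsplit, setIntegral_union (Set.Ioc_disjoint_Ioi le_rfl) hmeas1 (hcont.integrableOn_Ioc)
      ((integrableOn_zero).congr_fun (fun x hx => (hzero x hx).symm) measurableSet_Ioi)]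
  have h2 : ∫ t in Set.Ioi (T/c), max 0 (T - c*t) = 0 := by
    rw [setIntegral_congr_fun measurableSet_Ioi (g := fun _ => (0:ℝ)) hzero]; simp
  have h1 : ∫ t in Set.Ioc (0:ℝ) (T/c), max 0 (T - c*t) = T^2/(2*c) := by
    rw [setIntegral_congr_fun measurableSet_Ioc (g := fun t => T - c*t)]
    · rw [← intervalIntegral.integral_of_le hTc]
      rw [intervalIntegral.integral_sub (intervalIntegrable_const)
          ((intervalIntegral.intervalIntegrable_id).const_mul c),
        intervalIntegral.integral_const_mul, integral_id, intervalIntegral.integral_const]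
      simp only [smul_eq_mul]; field_simp; ring
    · intro x hx
      have := (le_div_iff₀ hc).mp (Set.mem_Ioc.mp hx).2
      simp only; rw [max_eq_right]; nlinarith
  rw [h1, h2]; ring

lemma integrable_max_zero (T c : ℝ) (hT : 0 ≤ T) (hc : 0 < c) :
    IntegrableOn (fun t : ℝ => max 0 (T - c*t)) (Set.Ioi 0) := by
  have hTc : (0:ℝ) ≤ T/c := div_nonneg hT hc.le
  have hcont : Continuous fun t : ℝ => max 0 (T - c*t) :=
    continuous_const.max (continuous_const.sub (continuous_const.mul continuous_id))
  have hzero : ∀ x ∈ Set.Ioi (T/c), (fun _ => (0:ℝ)) x = max 0 (T - c*x) := by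
    intro x hx
    have := (div_lt_iff₀ hc).mp (Set.mem_Ioi.mp hx)
    rw [max_eq_left]; nlinarith
  have : IntegrableOn (fun t : ℝ => max 0 (T - c*t)) (Set.Ioc 0 (T/c) ∪ Set.Ioi (T/c)) := (hcont.integrableOn_Ioc (a := 0) (b := T/c)).union
    ((integrableOn_zero).congr_fun hzero measurableSet_Ioi)
  rwa [Set.Ioc_union_Ioi_eq_Ioi hTc] at this

lemma meas_level_bound (A B u v t : ℝ) (huv : u < v) (hA : 0 < A) (hB : 0 < B) (ht : 0 < t)
    (e : ℝ → ℝ) (he : Continuous e) (heu : e u = 0) (hev : e v = 0)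
    (hup : ∀ x ∈ Set.Icc u v, ∀ y ∈ Set.Icc u v, x ≤ y → e y - e x ≤ A*(y-x))
    (hdown : ∀ x ∈ Set.Icc u v, ∀ y ∈ Set.Icc u v, x ≤ y → e x - e y ≤ B*(y-x)) :
    (volume ({a | t < e a} ∩ Set.Icc u v)).toReal ≤
      max 0 ((volume (Set.Icc u v ∩ {x | 0 < e x})).toReal - (t/A + t/B)) := by
  set S : Set ℝ := Set.Icc u v ∩ {x | 0 < e x} with hS
  set Y : Set ℝ := {a | t < e a} ∩ Set.Icc u v with hY
  rcases Set.eq_empty_or_nonempty Y with hYe | ⟨x₀, hx₀⟩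
  · rw [hYe]; simp
  obtain ⟨hx0e, hx0m⟩ := hx₀
  rw [Set.mem_setOf_eq] at hx0e
  -- left zero
  have hDc : IsClosed (Set.Icc u x₀ ∩ e ⁻¹' (Set.Iic 0)) :=
    isClosed_Icc.inter (isClosed_Iic.preimage he)
  have hDne : u ∈ Set.Icc u x₀ ∩ e ⁻¹' (Set.Iic 0) :=
    ⟨⟨le_refl u, hx0m.1⟩, by simp [heu]⟩
  have hDbdd : BddAbove (Set.Icc u x₀ ∩ e ⁻¹' (Set.Iic 0)) :=
    (bddAbove_Icc).mono Set.inter_subset_left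
  set α := sSup (Set.Icc u x₀ ∩ e ⁻¹' (Set.Iic 0)) with hα
  have hαD : α ∈ Set.Icc u x₀ ∩ e ⁻¹' (Set.Iic 0) := hDc.csSup_mem ⟨u, hDne⟩ hDbdd
  have hα1 : α ∈ Set.Icc u x₀ := hαD.1
  have hα2 : e α ≤ 0 := hαD.2
  have hαmem : α ∈ Set.Icc u v := ⟨hα1.1, le_trans hα1.2 hx0m.2⟩
  have hpos1 : ∀ x, α < x → x ≤ x₀ → 0 < e x := by
    intro x h1 h2
    by_contra hc
    push_neg at hc
    exact absurd (le_csSup hDbdd ⟨⟨le_trans hα1.1 h1.le, h2⟩, hc⟩) (not_le.mpr h1)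
  have hgap1 : t/A < x₀ - α := by
    have := hup α hαmem x₀ hx0m hα1.2
    rw [div_lt_iff₀ hA]
    nlinarith
  -- right zero
  have hD'c : IsClosed (Set.Icc x₀ v ∩ e ⁻¹' (Set.Iic 0)) :=
    isClosed_Icc.inter (isClosed_Iic.preimage he)
  have hD'ne : v ∈ Set.Icc x₀ v ∩ e ⁻¹' (Set.Iic 0) :=
    ⟨⟨hx0m.2, le_refl v⟩, by simp [hev]⟩
  have hD'bdd : BddBelow (Set.Icc x₀ v ∩ e ⁻¹' (Set.Iic 0)) :=
    (bddBelow_Icc).mono Set.inter_subset_left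
  set β := sInf (Set.Icc x₀ v ∩ e ⁻¹' (Set.Iic 0)) with hβ
  have hβD : β ∈ Set.Icc x₀ v ∩ e ⁻¹' (Set.Iic 0) := hD'c.csInf_mem ⟨v, hD'ne⟩ hD'bdd
  have hβ1 : β ∈ Set.Icc x₀ v := hβD.1
  have hβ2 : e β ≤ 0 := hβD.2
  have hβmem : β ∈ Set.Icc u v := ⟨le_trans hx0m.1 hβ1.1, hβ1.2⟩
  have hpos2 : ∀ x, x₀ ≤ x → x < β → 0 < e x := by
    intro x h1 h2
    by_contra hc
    push_neg at hc
    exact absurd (csInf_le hD'bdd ⟨⟨h1, le_trans h2.le hβ1.2⟩, hc⟩) (not_le.mpr h2)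
  have hgap2 : t/B < β - x₀ := by
    have := hdown x₀ hx0m β hβmem hβ1.1
    rw [div_lt_iff₀ hB]
    nlinarith
  -- the two gap intervals
  set I₁ := Set.Ioo α (α + t/A) with hI₁
  set I₂ := Set.Ioo (β - t/B) β with hI₂
  have htA : 0 < t/A := div_pos ht hA
  have htB : 0 < t/B := div_pos ht hB
  have hI₁S : I₁ ⊆ S ∩ {x | e x < t} := by
    rintro x ⟨h1, h2⟩
    have hxx0 : x < x₀ := lt_of_lt_of_le h2 (by linarith)
    have hxm : x ∈ Set.Icc u v := ⟨le_trans hα1.1 h1.le, le_trans hxx0.le hx0m.2⟩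
    have hex : 0 < e x := hpos1 x h1 hxx0.le
    refine ⟨⟨hxm, hex⟩, ?_⟩
    have := hup α hαmem x hxm h1.le
    have : e x ≤ A * (x - α) := by nlinarith
    have : A * (x - α) < t := by
      have : x - α < t/A := by linarith
      calc A * (x - α) < A * (t/A) := by exact mul_lt_mul_of_pos_left this hA
        _ = t := by field_simp
    simp only [Set.mem_setOf_eq]
    linarith
  have hI₂S : I₂ ⊆ S ∩ {x | e x < t} := by
    rintro x ⟨h1, h2⟩
    have hxx0 : x₀ < x := lt_of_le_of_lt (by linarith) h1
    have hxm : x ∈ Set.Icc u v := ⟨le_trans hx0m.1 hxx0.le, le_trans h2.le hβ1.2⟩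
    have hex : 0 < e x := hpos2 x hxx0.le h2
    refine ⟨⟨hxm, hex⟩, ?_⟩
    have := hdown x hxm β hβmem h2.le
    have : e x ≤ B * (β - x) := by nlinarith
    have : B * (β - x) < t := by
      have : β - x < t/B := by linarith
      calc B * (β - x) < B * (t/B) := by exact mul_lt_mul_of_pos_left this hB
        _ = t := by field_simp
    simp only [Set.mem_setOf_eq]
    linarith
  -- measurability
  have hYm : MeasurableSet Y :=
    (measurableSet_lt measurable_const he.measurable).inter measurableSet_Icc
  have hSm : MeasurableSet S :=
    measurableSet_Icc.inter (measurableSet_lt measurable_const he.measurable)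
  -- disjointness
  have hd1 : Disjoint Y I₁ := by
    rw [Set.disjoint_left]
    intro x hx hx1
    have h1 : e x < t := (hI₁S hx1).2
    have h2 : t < e x := hx.1
    linarith
  have hd2 : Disjoint Y I₂ := by
    rw [Set.disjoint_left]
    intro x hx hx2
    have h1 : e x < t := (hI₂S hx2).2
    have h2 : t < e x := hx.1
    linarith
  have hd3 : Disjoint I₁ I₂ := by
    rw [Set.disjoint_left]
    rintro x ⟨ha1, ha2⟩ ⟨hb1, hb2⟩
    linarith
  have hYS : Y ⊆ S := by
    rintro x ⟨hx1, hx2⟩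
    exact ⟨hx2, lt_trans ht hx1⟩
  have hsub : Y ∪ (I₁ ∪ I₂) ⊆ S :=
    Set.union_subset hYS (Set.union_subset (fun x hx => (hI₁S hx).1) (fun x hx => (hI₂S hx).1))
  have hIm : MeasurableSet (I₁ ∪ I₂) := measurableSet_Ioo.union measurableSet_Ioo
  have hmu : volume (Y ∪ (I₁ ∪ I₂)) = volume Y + (volume I₁ + volume I₂) := by
    rw [measure_union (Set.disjoint_union_right.mpr ⟨hd1, hd2⟩) hIm,
        measure_union hd3 measurableSet_Ioo]
  have hvI1 : volume I₁ = ENNReal.ofReal (t/A) := by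
    rw [hI₁, Real.volume_Ioo]; norm_num
  have hvI2 : volume I₂ = ENNReal.ofReal (t/B) := by
    rw [hI₂, Real.volume_Ioo]; norm_num
  have hle : volume Y + (ENNReal.ofReal (t/A) + ENNReal.ofReal (t/B)) ≤ volume S := by
    rw [← hvI1, ← hvI2, ← hmu]; exact measure_mono hsub
  have hSfin : volume S ≠ ⊤ := by
    refine ne_of_lt (lt_of_le_of_lt (measure_mono Set.inter_subset_left) ?_)
    rw [Real.volume_Icc]; exact ENNReal.ofReal_lt_top
  have hYfin : volume Y ≠ ⊤ := ne_top_of_le_ne_top hSfin (measure_mono hYS)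
  have key := ENNReal.toReal_mono hSfin hle
  rw [ENNReal.toReal_add hYfin (by finiteness), ENNReal.toReal_add (by finiteness) (by finiteness),
      ENNReal.toReal_ofReal htA.le, ENNReal.toReal_ofReal htB.le] at key
  exact le_max_of_le_right (by linarith)

lemma posPart_bound (A B u v : ℝ) (huv : u < v) (hA : 0 ≤ A) (hB : 0 ≤ B)
    (e : ℝ → ℝ) (he : Continuous e) (heu : e u = 0) (hev : e v = 0)
    (hup : ∀ x ∈ Set.Icc u v, ∀ y ∈ Set.Icc u v, x ≤ y → e y - e x ≤ A*(y-x))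
    (hdown : ∀ x ∈ Set.Icc u v, ∀ y ∈ Set.Icc u v, x ≤ y → e x - e y ≤ B*(y-x)) :
    ∫ x in Set.Icc u v, max (e x) 0 ≤
      (A+B) * ((volume (Set.Icc u v ∩ {x | 0 < e x})).toReal)^2 / 8 := by
  have humem : u ∈ Set.Icc u v := ⟨le_refl u, huv.le⟩
  have hvmem : v ∈ Set.Icc u v := ⟨huv.le, le_refl v⟩
  rcases eq_or_lt_of_le hA with hA0 | hApos
  · have hneg : ∀ x ∈ Set.Icc u v, max (e x) 0 = 0 := by
      intro x hx
      have := hup u humem x hx hx.1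
      rw [max_eq_right]; rw [heu, ← hA0] at this; linarith
    rw [setIntegral_congr_fun measurableSet_Icc hneg]
    simp only [integral_zero]
    positivity
  rcases eq_or_lt_of_le hB with hB0 | hBpos
  · have hneg : ∀ x ∈ Set.Icc u v, max (e x) 0 = 0 := by
      intro x hx
      have := hdown x hx v hvmem hx.2
      rw [max_eq_right]; rw [hev, ← hB0] at this; linarith
    rw [setIntegral_congr_fun measurableSet_Icc hneg]
    simp only [integral_zero]
    positivity
  set S : Set ℝ := Set.Icc u v ∩ {x | 0 < e x} with hS
  set T : ℝ := (volume S).toReal with hT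
  have hTnn : 0 ≤ T := ENNReal.toReal_nonneg
  set c : ℝ := 4/(A+B) with hc
  have hcpos : 0 < c := by positivity
  set μ' := volume.restrict (Set.Icc u v) with hμ'
  haveI : IsFiniteMeasure μ' := by
    constructor
    rw [Measure.restrict_apply_univ, Real.volume_Icc]
    exact ENNReal.ofReal_lt_top
  have hGcont : Continuous fun x => max (e x) 0 := he.max continuous_const
  have hGint : Integrable (fun x => max (e x) 0) μ' := hGcont.integrableOn_Icc
  have hlc := hGint.integral_eq_integral_meas_lt
    (Filter.Eventually.of_forall fun x => le_max_right _ _)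
  have hXm : ∀ t : ℝ, MeasurableSet {a : ℝ | t < max (e a) 0} := fun t =>
    measurableSet_lt measurable_const hGcont.measurable
  -- pointwise bound
  have hpt : ∀ t ∈ Set.Ioi (0:ℝ), (μ' {a | t < max (e a) 0}).toReal ≤ max 0 (T - c*t) := by
    intro t ht
    rw [Set.mem_Ioi] at ht
    rw [hμ', Measure.restrict_apply (hXm t)]
    have hseteq : {a : ℝ | t < max (e a) 0} ∩ Set.Icc u v = {a | t < e a} ∩ Set.Icc u v := by
      ext x
      simp only [Set.mem_inter_iff, Set.mem_setOf_eq, lt_max_iff, and_congr_left_iff]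
      intro _
      constructor
      · rintro (h | h); exact h; linarith
      · exact Or.inl
    rw [hseteq]
    refine le_trans (meas_level_bound A B u v t huv hApos hBpos ht e he heu hev hup hdown) ?_
    apply max_le_max le_rfl
    have h1 : c*t ≤ t/A + t/B := by
      rw [hc, div_add_div _ _ hApos.ne' hBpos.ne', div_mul_eq_mul_div,
        div_le_div_iff₀ (by positivity) (by positivity)]
      nlinarith [sq_nonneg (A-B)]
    linarith
  -- antitone integrand, integrable
  have hanti : Antitone fun t : ℝ => (μ' {a | t < max (e a) 0}).toReal := by
    intro s t hst
    exact ENNReal.toReal_mono (measure_ne_top μ' _)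
      (measure_mono fun a ha => lt_of_le_of_lt hst ha)
  have hmeas : Measurable fun t : ℝ => (μ' {a | t < max (e a) 0}).toReal := hanti.measurable
  have hint1 : IntegrableOn (fun t : ℝ => (μ' {a | t < max (e a) 0}).toReal) (Set.Ioi 0) := by
    refine Integrable.mono' (integrable_max_zero T c hTnn hcpos) hmeas.aestronglyMeasurable ?_
    rw [ae_restrict_iff' measurableSet_Ioi]
    filter_upwards with t ht
    rw [Real.norm_eq_abs, abs_of_nonneg ENNReal.toReal_nonneg]
    exact hpt t ht
  rw [hlc]
  calc ∫ t in Set.Ioi (0:ℝ), (μ' {a | t < max (e a) 0}).toReal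
      ≤ ∫ t in Set.Ioi (0:ℝ), max 0 (T - c*t) :=
        setIntegral_mono_on hint1 (integrable_max_zero T c hTnn hcpos) measurableSet_Ioi hpt
    _ = T^2/(2*c) := integral_max_zero T c hTnn hcpos
    _ = (A+B) * T^2 / 8 := by
        rw [hc]; rw [div_eq_div_iff (by positivity) (by norm_num)]; field_simp; ring

lemma interval_error (a b L : ℝ) (hL : 0 ≤ L) (f : ℝ → ℝ)
    (hf : ∀ x ∈ Set.Icc a b, ∀ y ∈ Set.Icc a b, |f x - f y| ≤ L * |x - y|)
    (u v : ℝ) (huv : u < v) (hsub : Set.Icc u v ⊆ Set.Icc a b) :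
    (IntervalIntegrable (fun t => |f t - (f u + (f v - f u)/(v-u) * (t-u))|) volume u v) ∧
    ∫ t in u..v, |f t - (f u + (f v - f u)/(v-u) * (t - u))| ≤ L * (v-u)^2/4 := by
  have hvu : (0:ℝ) < v - u := sub_pos.mpr huv
  set s : ℝ := (f v - f u)/(v-u) with hsdef
  have humem : u ∈ Set.Icc u v := ⟨le_refl u, huv.le⟩
  have hvmem : v ∈ Set.Icc u v := ⟨huv.le, le_refl v⟩
  have hs : |s| ≤ L := by
    rw [hsdef, abs_div, abs_of_pos hvu, div_le_iff₀ hvu]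
    have := hf v (hsub hvmem) u (hsub humem)
    rwa [abs_of_pos hvu] at this
  obtain ⟨hsL, hsU⟩ := abs_le.mp hs
  set A : ℝ := L - s with hAdef
  set B : ℝ := L + s with hBdef
  have hA : 0 ≤ A := by linarith
  have hB : 0 ≤ B := by linarith
  -- clamp
  set cl : ℝ → ℝ := fun t => min v (max u t) with hcl
  have hclmem : ∀ t, cl t ∈ Set.Icc u v :=
    fun t => ⟨le_min huv.le (le_max_left u t), min_le_left _ _⟩
  have hclid : ∀ t ∈ Set.Icc u v, cl t = t := by
    intro t ht
    rw [hcl]; simp only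
    rw [max_eq_right ht.1, min_eq_right ht.2]
  have hclcont : Continuous cl := continuous_const.min (continuous_const.max continuous_id)
  have hfc : ContinuousOn f (Set.Icc a b) := by
    refine (LipschitzOnWith.of_dist_le_mul (K := Real.toNNReal L) ?_).continuousOn
    intro x hx y hy
    rw [Real.dist_eq, Real.dist_eq, Real.coe_toNNReal L hL]
    exact hf x hx y hy
  set e : ℝ → ℝ := fun t => f (cl t) - f u - s * (cl t - u) with he_def
  have he : Continuous e := by
    refine ((hfc.comp_continuous hclcont fun t => hsub (hclmem t)).sub continuous_const).sub
      (continuous_const.mul (hclcont.sub continuous_const))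
  have heu : e u = 0 := by
    rw [he_def]; simp only; rw [hclid u humem]; ring
  have hev : e v = 0 := by
    rw [he_def]; simp only
    rw [hclid v hvmem, hsdef, div_mul_cancel₀ _ (ne_of_gt hvu)]; ring
  have heq : ∀ t ∈ Set.Icc u v, e t = f t - (f u + s * (t - u)) := by
    intro t ht; rw [he_def]; simp only; rw [hclid t ht]; ring
  have hup : ∀ x ∈ Set.Icc u v, ∀ y ∈ Set.Icc u v, x ≤ y → e y - e x ≤ A*(y-x) := by
    intro x hx y hy hxy
    have h1 := hf y (hsub hy) x (hsub hx)
    rw [abs_of_nonneg (by linarith : (0:ℝ) ≤ y - x)] at h1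
    obtain ⟨h2, h3⟩ := abs_le.mp h1
    rw [heq x hx, heq y hy, hAdef]
    nlinarith
  have hdown : ∀ x ∈ Set.Icc u v, ∀ y ∈ Set.Icc u v, x ≤ y → e x - e y ≤ B*(y-x) := by
    intro x hx y hy hxy
    have h1 := hf y (hsub hy) x (hsub hx)
    rw [abs_of_nonneg (by linarith : (0:ℝ) ≤ y - x)] at h1
    obtain ⟨h2, h3⟩ := abs_le.mp h1
    rw [heq x hx, heq y hy, hBdef]
    nlinarith
  -- the integral identity
  have hcong : ∀ t ∈ Set.Icc u v, |f t - (f u + s * (t-u))| = |e t| := by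
    intro t ht; rw [heq t ht]
  constructor
  · rw [intervalIntegrable_iff_integrableOn_Ioc_of_le huv.le]
    refine ((he.abs.integrableOn_Ioc)).congr_fun ?_ measurableSet_Ioc
    intro t ht
    exact (hcong t (Set.Ioc_subset_Icc_self ht)).symm
  · have hInt : ∫ t in u..v, |f t - (f u + s * (t - u))| = ∫ t in Set.Icc u v, |e t| := by
      rw [intervalIntegral.integral_congr (g := fun t => |e t|)
        (fun t ht => hcong t (by rwa [Set.uIcc_of_le huv.le] at ht)),
        intervalIntegral.integral_of_le huv.le, integral_Icc_eq_integral_Ioc]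
    rw [hInt]
    have habs : (fun t => |e t|) = fun t => max (e t) 0 + max (-(e t)) 0 := by
      funext t
      rcases le_total 0 (e t) with h | h
      · rw [abs_of_nonneg h, max_eq_left h, max_eq_right (by linarith)]; ring
      · rw [abs_of_nonpos h, max_eq_right h, max_eq_left (by linarith)]; ring
    rw [habs, integral_add (g := fun t => max (-(e t)) 0) ((he.max continuous_const).integrableOn_Icc)
      ((he.neg.max continuous_const).integrableOn_Icc)]
    have P1 := posPart_bound A B u v huv hA hB e he heu hev hup hdown
    have P2 := posPart_bound B A u v huv hB hA (fun t => -(e t)) he.neg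
      (by simp [heu]) (by simp [hev])
      (fun x hx y hy hxy => by have := hdown x hx y hy hxy; linarith)
      (fun x hx y hy hxy => by have := hup x hx y hy hxy; linarith)
    set l₁ : ℝ := (volume (Set.Icc u v ∩ {x | 0 < e x})).toReal with hl₁
    set l₂ : ℝ := (volume (Set.Icc u v ∩ {x | 0 < -(e x)})).toReal with hl₂
    have hl₁nn : 0 ≤ l₁ := ENNReal.toReal_nonneg
    have hl₂nn : 0 ≤ l₂ := ENNReal.toReal_nonneg
    have hlsum : l₁ + l₂ ≤ v - u := by
      have hdisj : Disjoint (Set.Icc u v ∩ {x | 0 < e x}) (Set.Icc u v ∩ {x | 0 < -(e x)}) := by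
        rw [Set.disjoint_left]
        rintro x ⟨-, h1⟩ ⟨-, h2⟩
        simp only [Set.mem_setOf_eq] at h1 h2
        linarith
      have hm2 : MeasurableSet (Set.Icc u v ∩ {x | 0 < -(e x)}) :=
        measurableSet_Icc.inter (measurableSet_lt measurable_const he.neg.measurable)
      have hle : volume (Set.Icc u v ∩ {x | 0 < e x}) + volume (Set.Icc u v ∩ {x | 0 < -(e x)})
          ≤ ENNReal.ofReal (v - u) := by
        rw [← measure_union hdisj hm2, ← Real.volume_Icc]
        exact measure_mono (Set.union_subset Set.inter_subset_left Set.inter_subset_left)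
      have := ENNReal.toReal_mono ENNReal.ofReal_ne_top hle
      have hf1 : volume (Set.Icc u v ∩ {x | 0 < e x}) ≠ ⊤ :=
        ((measure_mono Set.inter_subset_left).trans_lt
          (by rw [Real.volume_Icc]; exact ENNReal.ofReal_lt_top)).ne
      have hf2 : volume (Set.Icc u v ∩ {x | 0 < -(e x)}) ≠ ⊤ :=
        ((measure_mono Set.inter_subset_left).trans_lt
          (by rw [Real.volume_Icc]; exact ENNReal.ofReal_lt_top)).ne
      rwa [ENNReal.toReal_add hf1 hf2, ENNReal.toReal_ofReal hvu.le] at this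
    have hABL : A + B = 2 * L := by rw [hAdef, hBdef]; ring
    calc (∫ t in Set.Icc u v, max (e t) 0) + ∫ t in Set.Icc u v, max (-(e t)) 0
        ≤ (A+B) * l₁^2/8 + (B+A) * l₂^2/8 := add_le_add P1 P2
      _ = 2*L * (l₁^2 + l₂^2)/8 := by rw [hABL]; ring
      _ ≤ L * (v-u)^2/4 := by
          have h1 : (l₁+l₂)^2 ≤ (v-u)^2 := by nlinarith
          have h2 : l₁^2 + l₂^2 ≤ (v-u)^2 := by nlinarith [mul_nonneg hl₁nn hl₂nn]
          nlinarith [mul_le_mul_of_nonneg_left h2 hL]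

/-- Piecewise linear interpolation error bound for an `L`-Lipschitz function on `[a,b]`
partitioned into `P` equal subintervals. -/
theorem stmt_1 (a b L : ℝ) (hab : a < b) (hL : 0 ≤ L) (P : ℕ) (hP : 0 < P)
    (f fhat : ℝ → ℝ)
    (hf : ∀ x ∈ Set.Icc a b, ∀ y ∈ Set.Icc a b, |f x - f y| ≤ L * |x - y|)
    (hfhat : ∀ i : ℕ, i < P →
      ∀ x ∈ Set.Icc (a + i * (b - a) / P) (a + (i + 1) * (b - a) / P),
        fhat x = f (a + i * (b - a) / P) +
          (f (a + (i + 1) * (b - a) / P) - f (a + i * (b - a) / P)) /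
            ((b - a) / P) * (x - (a + i * (b - a) / P))) :
    ∫ x in a..b, |f x - fhat x| ≤ L * (b - a) ^ 2 / (4 * P) := by
  have hba : (0:ℝ) < b - a := sub_pos.mpr hab
  have hPR : (0:ℝ) < P := Nat.cast_pos.mpr hP
  set X : ℕ → ℝ := fun i => a + i * (b - a) / P with hX
  have hXi : ∀ i : ℕ, X i = a + (i:ℝ) * (b - a) / P := fun i => rfl
  have hXsucc : ∀ i : ℕ, X (i+1) = a + ((i:ℝ) + 1) * (b - a) / P := by
    intro i; rw [hXi (i+1)]; push_cast; ring
  have hdiff : ∀ i : ℕ, X (i+1) - X i = (b - a)/P := by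
    intro i; rw [hXsucc i, hXi i]; ring
  have hX0 : X 0 = a := by rw [hXi 0]; simp
  have hXP : X P = b := by rw [hXi P]; field_simp; ring
  clear_value X
  have key : ∀ i : ℕ, i < P →
      IntervalIntegrable (fun t => |f t - fhat t|) volume (X i) (X (i+1)) ∧
      ∫ t in X i..X (i+1), |f t - fhat t| ≤ L * ((b-a)/P)^2/4 := by
    intro i hiP
    have hd := hdiff i
    have huv : X i < X (i+1) := by
      have h2 : (0:ℝ) < (b-a)/P := by positivity
      linarith
    have hsubI : Set.Icc (X i) (X (i+1)) ⊆ Set.Icc a b := by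
      apply Set.Icc_subset_Icc
      · rw [hXi i]
        have : (0:ℝ) ≤ (i:ℝ) * (b-a)/P := by positivity
        linarith
      · rw [hXsucc i]
        have hcast : ((i:ℝ) + 1) ≤ (P:ℝ) := by exact_mod_cast hiP
        have h1 : ((i:ℝ)+1) * (b-a)/P ≤ (P:ℝ) * (b-a)/P := by gcongr
        have h2 : (P:ℝ) * (b-a)/P = b - a := by field_simp
        linarith
    obtain ⟨IE1, IE2⟩ := interval_error a b L hL f hf (X i) (X (i+1)) huv hsubI
    have heqOn : ∀ t ∈ Set.Icc (X i) (X (i+1)),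
        |f t - fhat t| =
          |f t - (f (X i) + (f (X (i+1)) - f (X i))/(X (i+1) - X i) * (t - X i))| := by
      intro t ht
      have ht' := ht
      rw [hXi i, hXsucc i] at ht'
      have h1 := hfhat i hiP t ht'
      rw [← hXi i, ← hXsucc i, ← hdiff i] at h1
      rw [h1]
    constructor
    · rw [intervalIntegrable_iff_integrableOn_Ioc_of_le huv.le]
      rw [intervalIntegrable_iff_integrableOn_Ioc_of_le huv.le] at IE1
      refine IE1.congr_fun ?_ measurableSet_Ioc
      intro t ht
      exact (heqOn t (Set.Ioc_subset_Icc_self ht)).symm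
    · rw [intervalIntegral.integral_congr
        (g := fun t => |f t - (f (X i) + (f (X (i+1)) - f (X i))/(X (i+1) - X i) * (t - X i))|)
        (fun t ht => heqOn t (by rwa [Set.uIcc_of_le huv.le] at ht))]
      calc _ ≤ L * (X (i+1) - X i)^2/4 := IE2
        _ = L * ((b-a)/P)^2/4 := by rw [hdiff i]
  have hsum := intervalIntegral.sum_integral_adjacent_intervals
    (a := X) (n := P) (f := fun t => |f t - fhat t|) (fun k hk => (key k hk).1)
  rw [hX0, hXP] at hsum
  rw [← hsum]
  calc ∑ k ∈ Finset.range P, ∫ t in X k..X (k+1), |f t - fhat t|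
      ≤ ∑ k ∈ Finset.range P, L * ((b-a)/P)^2/4 :=
        Finset.sum_le_sum (fun k hk => (key k (Finset.mem_range.mp hk)).2)
    _ = P * (L * ((b-a)/P)^2/4) := by rw [Finset.sum_const, Finset.card_range, nsmul_eq_mul]
    _ = L * (b - a)^2 / (4 * P) := by field_simp
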